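/- For every set Λ of non-negative integers, the maximum density D̄₂(Λ) equals the infimum of densities of measurable sets Λ' of non-negative integers containing Λ. -/

import Mathlib

open Filter

/-- Counting function `n(x, Λ) = #(Λ ∩ [0, x])`. -/
noncomputable def countFn (Λ : Set ℕ) (x : ℝ) : ℕ :=
  {m ∈ Λ | (m : ℝ) ≤ x}.ncard

/-- Local density of `Λ` on the window `(x, (1+r)x]`. -/
noncomputable def windowRatio (Λ : Set ℕ) (r x : ℝ) : ℝ :=
  ((countFn Λ ((1 + r) * x) : ℝ) - countFn Λ x) / (r * x)

/-- `liminf` as `x → ∞` of the local density at window parameter `r`. -/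
noncomputable def lowerWindow (Λ : Set ℕ) (r : ℝ) : ℝ :=
  liminf (fun x : ℝ => windowRatio Λ r x) atTop

/-- `limsup` as `x → ∞` of the local density at window parameter `r`. -/
noncomputable def upperWindow (Λ : Set ℕ) (r : ℝ) : ℝ :=
  limsup (fun x : ℝ => windowRatio Λ r x) atTop

/-- `Λ` is measurable with density `d`. -/
def HasDensity (Λ : Set ℕ) (d : ℝ) : Prop :=
  Tendsto (fun x : ℝ => (countFn Λ x : ℝ) / x) atTop (nhds d)



lemma countFn_finite (Λ : Set ℕ) (x : ℝ) : {m ∈ Λ | (m : ℝ) ≤ x}.Finite := by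
  apply (Set.finite_Iic ⌊x⌋₊).subset
  rintro m ⟨-, hm⟩
  exact Set.mem_Iic.2 (Nat.le_floor hm)

lemma countFn_mono_x (Λ : Set ℕ) {x y : ℝ} (h : x ≤ y) : countFn Λ x ≤ countFn Λ y :=
  Set.ncard_le_ncard (fun m ⟨h1, h2⟩ => ⟨h1, h2.trans h⟩) (countFn_finite Λ y)

lemma countFn_floor (Λ : Set ℕ) {x : ℝ} (hx : 0 ≤ x) :
    countFn Λ x = countFn Λ (⌊x⌋₊ : ℝ) := by
  unfold countFn
  congr 1
  ext m
  simp only [Set.mem_setOf_eq, and_congr_right_iff]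
  intro _
  rw [Nat.cast_le, ← Nat.le_floor_iff hx]

lemma countFn_diff (Λ : Set ℕ) {x y : ℝ} (h : x ≤ y) :
    countFn Λ y = countFn Λ x + {m ∈ Λ | x < (m : ℝ) ∧ (m : ℝ) ≤ y}.ncard := by
  unfold countFn
  rw [← Set.ncard_union_eq ?_ (countFn_finite Λ x) ?_]
  · congr 1
    ext m
    simp only [Set.mem_setOf_eq, Set.mem_union]
    constructor
    · rintro ⟨h1, h2⟩
      rcases le_or_gt (m : ℝ) x with h3 | h3
      · exact Or.inl ⟨h1, h3⟩
      · exact Or.inr ⟨h1, h3, h2⟩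
    · rintro (⟨h1, h2⟩ | ⟨h1, h2, h3⟩)
      · exact ⟨h1, h2.trans h⟩
      · exact ⟨h1, h3⟩
  · rw [Set.disjoint_left]
    rintro m ⟨-, h2⟩ ⟨-, h3, -⟩
    exact absurd h2 (not_le.2 h3)
  · exact (countFn_finite Λ y).subset (fun m ⟨h1, _, h3⟩ => ⟨h1, h3⟩)

lemma midset_eq (Λ : Set ℕ) {x y : ℝ} (hx : 0 ≤ x) :
    {m ∈ Λ | x < (m : ℝ) ∧ (m : ℝ) ≤ y} ⊆ ↑(Finset.Ioc ⌊x⌋₊ ⌊y⌋₊) := by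
  rintro m ⟨-, h2, h3⟩
  simp only [Finset.coe_Ioc, Set.mem_Ioc]
  exact ⟨(Nat.floor_lt hx).2 h2, Nat.le_floor h3⟩

lemma countFn_window_le (Λ : Set ℕ) {x y : ℝ} (hx : 0 ≤ x) (h : x ≤ y) :
    (countFn Λ y : ℝ) ≤ countFn Λ x + (y - x) + 1 := by
  rw [countFn_diff Λ h]
  push_cast
  have h1 : {m ∈ Λ | x < (m : ℝ) ∧ (m : ℝ) ≤ y}.ncard ≤ (Finset.Ioc ⌊x⌋₊ ⌊y⌋₊).card := by
    rw [← Set.ncard_coe_finset]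
    exact Set.ncard_le_ncard (midset_eq Λ hx) (Finset.finite_toSet _)
  have h2 : ((Finset.Ioc ⌊x⌋₊ ⌊y⌋₊).card : ℝ) ≤ y - x + 1 := by
    rw [Nat.card_Ioc]
    have hy : (0:ℝ) ≤ y := hx.trans h
    have f1 : (⌊y⌋₊ : ℝ) ≤ y := Nat.floor_le hy
    have f2 : x < (⌊x⌋₊ : ℝ) + 1 := Nat.lt_floor_add_one x
    rcases le_or_gt ⌊x⌋₊ ⌊y⌋₊ with hh | hh
    · rw [Nat.cast_sub hh]
      push_cast
      have f3 : (⌊x⌋₊:ℝ) ≤ ⌊x⌋₊ := le_refl _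
      linarith
    · rw [Nat.sub_eq_zero_of_le hh.le]
      push_cast
      linarith
  have := (Nat.cast_le (α := ℝ)).2 h1
  refine le_trans ?_ (by linarith : (countFn Λ x : ℝ) + (y - x + 1) ≤ countFn Λ x + (y - x) + 1)
  linarith

lemma countFn_window_mono {Λ Λ' : Set ℕ} (hsub : Λ ⊆ Λ') {x y : ℝ} (h : x ≤ y) :
    (countFn Λ y : ℝ) - countFn Λ x ≤ (countFn Λ' y : ℝ) - countFn Λ' x := by
  rw [countFn_diff Λ h, countFn_diff Λ' h]
  push_cast
  have h5 : {m ∈ Λ | x < (m : ℝ) ∧ (m : ℝ) ≤ y}.ncard ≤ {m ∈ Λ' | x < (m : ℝ) ∧ (m : ℝ) ≤ y}.ncard := by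
    refine Set.ncard_le_ncard (fun m hm => ⟨hsub hm.1, hm.2⟩) ?_
    exact ((countFn_finite Λ' y).subset (fun m hm => ⟨hm.1, hm.2.2⟩))
  have := (Nat.cast_le (α := ℝ)).2 h5
  linarith

open Classical in
lemma countFn_zero (Λ : Set ℕ) : countFn Λ (0:ℝ) = if 0 ∈ Λ then 1 else 0 := by
  unfold countFn
  have : {m ∈ Λ | (m : ℝ) ≤ 0} = if 0 ∈ Λ then {0} else ∅ := by
    split_ifs with h
    · ext m
      simp only [Set.mem_setOf_eq, Set.mem_singleton_iff]
      constructor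
      · rintro ⟨h1, h2⟩
        exact_mod_cast le_antisymm h2 (Nat.cast_nonneg m)
      · rintro rfl; exact ⟨h, by norm_num⟩
    · ext m
      simp only [Set.mem_setOf_eq, Set.mem_empty_iff_false, iff_false]
      rintro ⟨h1, h2⟩
      have : m = 0 := by exact_mod_cast le_antisymm h2 (Nat.cast_nonneg m)
      exact h (this ▸ h1)
  rw [this]
  split_ifs <;> simp

open Classical in
lemma countFn_succ (Λ : Set ℕ) (n : ℕ) :
    countFn Λ ((n+1 : ℕ) : ℝ) = countFn Λ (n : ℝ) + if (n+1) ∈ Λ then 1 else 0 := by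
  unfold countFn
  have hset : {m ∈ Λ | (m : ℝ) ≤ ((n+1:ℕ):ℝ)} =
      if (n+1) ∈ Λ then insert (n+1) {m ∈ Λ | (m : ℝ) ≤ (n:ℝ)} else {m ∈ Λ | (m : ℝ) ≤ (n:ℝ)} := by
    split_ifs with h
    · ext m
      simp only [Set.mem_setOf_eq, Set.mem_insert_iff]
      constructor
      · rintro ⟨h1, h2⟩
        have h2' : m ≤ n + 1 := by exact_mod_cast h2
        rcases eq_or_lt_of_le h2' with rfl | hlt
        · exact Or.inl rfl
        · exact Or.inr ⟨h1, by exact_mod_cast Nat.lt_succ_iff.1 hlt⟩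
      · rintro (rfl | ⟨h1, h2⟩)
        · exact ⟨h, le_refl _⟩
        · refine ⟨h1, ?_⟩
          have : m ≤ n := by exact_mod_cast h2
          exact_mod_cast this.trans (Nat.le_succ n)
    · ext m
      simp only [Set.mem_setOf_eq]
      constructor
      · rintro ⟨h1, h2⟩
        have h2' : m ≤ n + 1 := by exact_mod_cast h2
        rcases eq_or_lt_of_le h2' with rfl | hlt
        · exact absurd h1 h
        · exact ⟨h1, by exact_mod_cast Nat.lt_succ_iff.1 hlt⟩
      · rintro ⟨h1, h2⟩
        have : m ≤ n := by exact_mod_cast h2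
        exact ⟨h1, by exact_mod_cast this.trans (Nat.le_succ n)⟩
  rw [hset]
  split_ifs with h
  · rw [Set.ncard_insert_of_notMem ?_ (countFn_finite Λ n)]
    intro hmem
    have : ((n+1:ℕ):ℝ) ≤ (n:ℝ) := hmem.2
    have : (n+1:ℕ) ≤ n := by exact_mod_cast this
    omega
  · simp

lemma countFn_univ {x : ℝ} (hx : 0 ≤ x) : countFn Set.univ x = ⌊x⌋₊ + 1 := by
  unfold countFn
  have : {m ∈ (Set.univ : Set ℕ) | (m : ℝ) ≤ x} = Set.Iic ⌊x⌋₊ := by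
    ext m
    simp only [Set.mem_setOf_eq, Set.mem_Iic, Set.mem_univ, true_and]
    exact ⟨fun h => Nat.le_floor h, fun h => le_trans (Nat.cast_le.2 h) (Nat.floor_le hx)⟩
  rw [this, ← Finset.coe_Iic, Set.ncard_coe_finset, Nat.card_Iic]


lemma hasDensity_univ : HasDensity Set.univ 1 := by
  unfold HasDensity
  have h1 : ∀ᶠ x : ℝ in atTop, 1 ≤ (countFn Set.univ x : ℝ) / x := by
    filter_upwards [eventually_gt_atTop 0] with x hx
    rw [le_div_iff₀ hx, one_mul, countFn_univ hx.le]
    push_cast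
    linarith [Nat.lt_floor_add_one x]
  have h2 : ∀ᶠ x : ℝ in atTop, (countFn Set.univ x : ℝ) / x ≤ 1 + 1/x := by
    filter_upwards [eventually_gt_atTop 0] with x hx
    rw [div_le_iff₀ hx, countFn_univ hx.le]
    push_cast
    have := Nat.floor_le hx.le
    field_simp
    linarith
  have hlim : Tendsto (fun x : ℝ => 1 + 1/x) atTop (nhds 1) := by
    have := (tendsto_const_nhds (x := (1:ℝ)) (f := atTop (α := ℝ))).add tendsto_inv_atTop_zero
    simpa [one_div] using this
  exact tendsto_of_tendsto_of_tendsto_of_le_of_le' tendsto_const_nhds hlim h1 h2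

open Classical in
/-- cumulative count of the greedy superset with target density `c` -/
noncomputable def gcnt (Λ : Set ℕ) (c : ℝ) : ℕ → ℕ
  | 0 => if 0 ∈ Λ then 1 else 0
  | n+1 => gcnt Λ c n + (if ((n+1) ∈ Λ ∨ (gcnt Λ c n : ℝ) < c * (n+1)) then 1 else 0)

/-- the greedy superset -/
def gset (Λ : Set ℕ) (c : ℝ) : Set ℕ :=
  {n | n ∈ Λ ∨ ∃ m : ℕ, n = m + 1 ∧ (gcnt Λ c m : ℝ) < c * (m+1)}

lemma subset_gset (Λ : Set ℕ) (c : ℝ) : Λ ⊆ gset Λ c := fun n hn => Or.inl hn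

lemma gset_zero_iff (Λ : Set ℕ) (c : ℝ) : 0 ∈ gset Λ c ↔ 0 ∈ Λ := by
  constructor
  · rintro (h | ⟨m, hm, -⟩)
    · exact h
    · omega
  · exact Or.inl

lemma gset_succ_iff (Λ : Set ℕ) (c : ℝ) (n : ℕ) :
    (n+1) ∈ gset Λ c ↔ ((n+1) ∈ Λ ∨ (gcnt Λ c n : ℝ) < c * (n+1)) := by
  constructor
  · rintro (h | ⟨m, hm, hlt⟩)
    · exact Or.inl h
    · have : m = n := by omega
      subst this
      exact Or.inr (by exact_mod_cast hlt)
  · rintro (h | h)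
    · exact Or.inl h
    · exact Or.inr ⟨n, rfl, by exact_mod_cast h⟩

lemma countFn_gset (Λ : Set ℕ) (c : ℝ) (n : ℕ) :
    countFn (gset Λ c) (n : ℝ) = gcnt Λ c n := by
  induction n with
  | zero =>
    rw [Nat.cast_zero, countFn_zero]
    simp only [gcnt]
    split_ifs with h1 h2 h2
    · rfl
    · exact absurd ((gset_zero_iff Λ c).1 h1) h2
    · exact absurd ((gset_zero_iff Λ c).2 h2) h1
    · rfl
  | succ n ih =>
    rw [countFn_succ, ih]
    simp only [gcnt]
    congr 1
    split_ifs with h1 h2 h2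
    · rfl
    · exact absurd ((gset_succ_iff Λ c n).1 h1) h2
    · exact absurd ((gset_succ_iff Λ c n).2 h2) h1
    · rfl

lemma gcnt_lower (Λ : Set ℕ) {c : ℝ} (hc1 : c ≤ 1) (n : ℕ) :
    c * (n + 1) - 1 ≤ (gcnt Λ c n : ℝ) := by
  induction n with
  | zero =>
    simp only [gcnt]
    split_ifs with h <;> push_cast <;> linarith
  | succ n ih =>
    simp only [gcnt]
    by_cases h : ((n+1) ∈ Λ ∨ (gcnt Λ c n : ℝ) < c * (n+1))
    · rw [if_pos h]
      push_cast
      linarith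
    · rw [if_neg h]
      push_cast at h ⊢
      push_neg at h
      linarith [h.2]

lemma chainLemma (Λ : Set ℕ) {c r X₀ : ℝ} (hr : 0 < r) (hc : 0 ≤ c) (hX : 0 < X₀)
    (H : ∀ x, X₀ ≤ x → (countFn Λ ((1+r)*x) : ℝ) ≤ countFn Λ x + c*r*x) :
    ∀ m n : ℝ, X₀ ≤ m → m ≤ n → (countFn Λ n : ℝ) ≤ countFn Λ m + c*((1+r)*n - m) := by
  intro m n hm hmn
  have hm0 : 0 < m := lt_of_lt_of_le hX hm
  have hr1 : (1:ℝ) < 1 + r := by linarith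
  obtain ⟨k, hk⟩ : ∃ k : ℕ, n/m < (1+r)^k := pow_unbounded_of_one_lt _ hr1
  have hk' : n ≤ (1+r)^k * m := by
    rw [div_lt_iff₀ hm0] at hk
    linarith
  clear hk
  induction k generalizing n with
  | zero =>
    simp only [pow_zero, one_mul] at hk'
    have hnm : n = m := le_antisymm hk' hmn
    subst hnm
    have : (0:ℝ) ≤ c*((1+r)*n - n) := by
      have : (1+r)*n - n = r*n := by ring
      rw [this]
      positivity
    linarith
  | succ k ih =>
    rcases le_or_gt n ((1+r)*m) with hcase | hcase
    · have h1 : (countFn Λ n : ℝ) ≤ countFn Λ ((1+r)*m) := by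
        exact_mod_cast countFn_mono_x Λ hcase
      have h2 := H m hm
      have h3 : c*r*m ≤ c*((1+r)*n - m) := by
        have e : (1+r)*n - m = (n - m) + r*n := by ring
        rw [e]
        have : c*r*m ≤ c*r*n := by
          apply mul_le_mul_of_nonneg_left hmn (by positivity)
        nlinarith
      linarith
    · set y := n/(1+r) with hy
      have hy0 : 0 < (1+r) := by linarith
      have hym : m ≤ y := by
        rw [hy, le_div_iff₀ hy0]
        linarith
      have hyn : (1+r)*y = n := by
        rw [hy]; field_simp
      have hyk : y ≤ (1+r)^k * m := by
        rw [hy, div_le_iff₀ hy0]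
        calc n ≤ (1+r)^(k+1) * m := hk'
          _ = (1+r)^k * m * (1+r) := by ring
      have hH := H y (hm.trans hym)
      rw [hyn] at hH
      have hih := ih y hym hyk
      have hfin : c*((1+r)*y - m) + c*r*y ≤ c*((1+r)*n - m) := by
        have hn0 : 0 ≤ n := by linarith
        have hy2 : (1+2*r)*y ≤ (1+r)*n := by
          rw [hy, mul_div_assoc']
          rw [div_le_iff₀ hy0]
          nlinarith [mul_nonneg (mul_nonneg hr.le hr.le) hn0]
        nlinarith
      linarith

open Classical in
lemma gcnt_invariant (Λ : Set ℕ) (c : ℝ) (X₁ : ℕ) :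
    ∀ n, X₁ ≤ n →
      ((gcnt Λ c n + countFn Λ ((X₁:ℕ):ℝ) = gcnt Λ c X₁ + countFn Λ (n:ℝ)) ∨
       ∃ m : ℕ, X₁ < m ∧ m ≤ n ∧ 1 ≤ m ∧ ((gcnt Λ c (m-1) : ℝ) < c * m) ∧
         ((gcnt Λ c n : ℝ) + countFn Λ (m:ℝ) ≤ c*m + 1 + countFn Λ (n:ℝ))) := by
  intro n hn
  induction n, hn using Nat.le_induction with
  | base => exact Or.inl rfl
  | succ n hn ih =>
    by_cases hth : (gcnt Λ c n : ℝ) < c * (n+1)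
    · refine Or.inr ⟨n+1, by omega, le_refl _, by omega, ?_, ?_⟩
      · simpa using hth
      · have h1 : (gcnt Λ c (n+1) : ℝ) ≤ gcnt Λ c n + 1 := by
          simp only [gcnt]
          split_ifs <;> push_cast <;> linarith
        push_cast
        push_cast at hth
        linarith
    · have hrec : gcnt Λ c (n+1) = gcnt Λ c n + (if (n+1) ∈ Λ then 1 else 0) := by
        simp only [gcnt]
        congr 1
        by_cases hmem : (n+1) ∈ Λ
        · rw [if_pos hmem, if_pos (Or.inl hmem)]
        · rw [if_neg hmem, if_neg]
          rintro (h | h)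
          · exact hmem h
          · exact hth (by exact_mod_cast h)
      have hcrec : countFn Λ ((n+1:ℕ):ℝ) = countFn Λ (n:ℝ) + (if (n+1) ∈ Λ then 1 else 0) :=
        countFn_succ Λ n
      rcases ih with hA | ⟨m, hm1, hm2, hm3, hm4, hm5⟩
      · left
        push_cast at hcrec ⊢
        omega
      · refine Or.inr ⟨m, hm1, by omega, hm3, hm4, ?_⟩
        rw [hrec, hcrec]
        push_cast
        push_cast at hm5
        split_ifs <;> push_cast <;> linarith

lemma gcnt_upper (Λ : Set ℕ) {c r : ℝ} (hc : 0 ≤ c) (hr : 0 < r) (X₁ : ℕ) (hX₁ : 1 ≤ X₁)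
    (H : ∀ x, (X₁:ℝ) ≤ x → (countFn Λ ((1+r)*x) : ℝ) ≤ countFn Λ x + c*r*x) :
    ∀ n, X₁ ≤ n → (gcnt Λ c n : ℝ) ≤ c*(1+r)*n + (gcnt Λ c X₁ + 1) := by
  intro n hn
  have hX0 : (0:ℝ) < X₁ := by exact_mod_cast hX₁
  have chain := chainLemma Λ hr hc hX0 H
  rcases gcnt_invariant Λ c X₁ n hn with hA | ⟨m, hm1, hm2, _, _, hm5⟩
  · have h1 := chain (X₁:ℝ) (n:ℝ) (le_refl _) (by exact_mod_cast hn)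
    have hA' : (gcnt Λ c n : ℝ) + countFn Λ ((X₁:ℕ):ℝ) = gcnt Λ c X₁ + countFn Λ (n:ℝ) := by
      exact_mod_cast congrArg (Nat.cast : ℕ → ℝ) hA
    have hcX : 0 ≤ c * (X₁:ℝ) := by positivity
    nlinarith
  · have hmX : ((X₁:ℕ):ℝ) ≤ (m:ℝ) := by exact_mod_cast hm1.le
    have h1 := chain (m:ℝ) (n:ℝ) hmX (by exact_mod_cast hm2)
    nlinarith



lemma windowRatio_nonneg (Λ : Set ℕ) {r : ℝ} (hr : 0 < r) :
    ∀ᶠ x : ℝ in atTop, 0 ≤ windowRatio Λ r x := by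
  filter_upwards [eventually_gt_atTop 0] with x hx
  unfold windowRatio
  apply div_nonneg _ (by positivity)
  have : countFn Λ x ≤ countFn Λ ((1+r)*x) := countFn_mono_x Λ (by nlinarith)
  have := (Nat.cast_le (α := ℝ)).2 this
  linarith

lemma windowRatio_le_two (Λ : Set ℕ) {r : ℝ} (hr : 0 < r) :
    ∀ᶠ x : ℝ in atTop, windowRatio Λ r x ≤ 2 := by
  filter_upwards [eventually_ge_atTop (max 1 (1/r))] with x hx
  have hx1 : (1:ℝ) ≤ x := le_trans (le_max_left _ _) hx
  have hxr : 1/r ≤ x := le_trans (le_max_right _ _) hx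
  have hx0 : (0:ℝ) < x := by linarith
  have hrx : 1 ≤ r * x := by
    rw [div_le_iff₀ hr] at hxr
    linarith [hxr]
  have hw := countFn_window_le Λ hx0.le (by nlinarith : x ≤ (1+r)*x)
  unfold windowRatio
  rw [div_le_iff₀ (by positivity)]
  have : (1+r)*x - x = r*x := by ring
  rw [this] at hw
  linarith

lemma windowRatio_boundedUnder (Λ : Set ℕ) {r : ℝ} (hr : 0 < r) :
    IsBoundedUnder (· ≤ ·) atTop (fun x : ℝ => windowRatio Λ r x) :=
  ⟨2, windowRatio_le_two Λ hr⟩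

lemma upperWindow_nonneg (Λ : Set ℕ) {r : ℝ} (hr : 0 < r) : 0 ≤ upperWindow Λ r :=
  le_limsup_of_frequently_le ((windowRatio_nonneg Λ hr).frequently)
    (windowRatio_boundedUnder Λ hr)

lemma tendsto_windowRatio_of_hasDensity {Λ' : Set ℕ} {d r : ℝ} (hr : 0 < r)
    (hd : HasDensity Λ' d) :
    Tendsto (fun x : ℝ => windowRatio Λ' r x) atTop (nhds d) := by
  have hmul : Tendsto (fun x : ℝ => (1+r)*x) atTop atTop :=
    Tendsto.const_mul_atTop (by linarith) tendsto_id
  have h1 : Tendsto (fun x : ℝ => (countFn Λ' ((1+r)*x) : ℝ) / ((1+r)*x)) atTop (nhds d) :=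
    hd.comp hmul
  have h2 : Tendsto
      (fun x : ℝ => ((countFn Λ' ((1+r)*x) : ℝ) / ((1+r)*x) * (1+r) - (countFn Λ' x : ℝ)/x)/r)
      atTop (nhds ((d * (1+r) - d)/r)) :=
    ((h1.mul_const (1+r)).sub hd).div_const r
  have heq : (d * (1+r) - d)/r = d := by
    field_simp
    ring
  rw [heq] at h2
  apply h2.congr'
  filter_upwards [eventually_gt_atTop 0] with x hx
  unfold windowRatio
  have hx0 : x ≠ 0 := ne_of_gt hx
  have hr0 : r ≠ 0 := ne_of_gt hr
  have h1r : (1+r) ≠ 0 := by positivity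
  field_simp

lemma upperWindow_le_of_superset {Λ Λ' : Set ℕ} (hsub : Λ ⊆ Λ') {d r : ℝ} (hr : 0 < r)
    (hd : HasDensity Λ' d) : upperWindow Λ r ≤ d := by
  have hv := tendsto_windowRatio_of_hasDensity hr hd
  have hEq : upperWindow Λ' r = d := hv.limsup_eq
  rw [← hEq]
  apply limsup_le_limsup _ _ (hv.isBoundedUnder_le)
  · filter_upwards [eventually_gt_atTop 0] with x hx
    unfold windowRatio
    apply div_le_div_of_nonneg_right ?_ (by positivity)
    exact countFn_window_mono hsub (by nlinarith : x ≤ (1+r)*x)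
  · exact isCoboundedUnder_le_of_eventually_le atTop (windowRatio_nonneg Λ hr)

lemma countFn_gset_real (Λ : Set ℕ) (c : ℝ) {x : ℝ} (hx : 0 ≤ x) :
    countFn (gset Λ c) x = gcnt Λ c ⌊x⌋₊ := by
  rw [countFn_floor _ hx, countFn_gset]

lemma hasDensity_gset (Λ : Set ℕ) {L c : ℝ}
    (hL : Tendsto (fun r => upperWindow Λ r) (nhdsWithin 0 (Set.Ioi 0)) (nhds L))
    (hLc : L < c) (hc0 : 0 ≤ c) (hc1 : c ≤ 1) : HasDensity (gset Λ c) c := by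
  unfold HasDensity
  rw [tendsto_order]
  constructor
  · -- lower bound
    intro a ha
    have hpos : 0 < c - a := by linarith
    filter_upwards [eventually_gt_atTop (max 1 (1/(c-a)))] with x hx
    have hx1 : (1:ℝ) < x := lt_of_le_of_lt (le_max_left _ _) hx
    have hx2 : 1/(c-a) < x := lt_of_le_of_lt (le_max_right _ _) hx
    have hx0 : (0:ℝ) < x := by linarith
    rw [lt_div_iff₀ hx0, countFn_gset_real Λ c hx0.le]
    have hlow := gcnt_lower Λ hc1 ⌊x⌋₊
    have hfl : x < (⌊x⌋₊ : ℝ) + 1 := Nat.lt_floor_add_one x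
    have h3 : c * x - 1 ≤ (gcnt Λ c ⌊x⌋₊ : ℝ) := by
      have : c * x ≤ c * ((⌊x⌋₊:ℝ) + 1) := mul_le_mul_of_nonneg_left (by linarith) hc0
      linarith
    have h4 : a * x < c * x - 1 := by
      rw [div_lt_iff₀ hpos] at hx2
      nlinarith
    linarith
  · -- upper bound
    intro a ha
    set ε := (a - c)/2 with hε
    have hε0 : 0 < ε := by simp [hε]; linarith
    -- choose r
    have hev : ∀ᶠ r in nhdsWithin 0 (Set.Ioi 0),
        (upperWindow Λ r < c ∧ r < ε ∧ 0 < r) := by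
      have e1 : ∀ᶠ r in nhdsWithin 0 (Set.Ioi 0), upperWindow Λ r < c :=
        hL.eventually (eventually_lt_nhds hLc)
      have e2 : ∀ᶠ r in nhdsWithin 0 (Set.Ioi 0), r < ε :=
        eventually_nhdsWithin_of_eventually_nhds (eventually_lt_nhds hε0)
      have e3 : ∀ᶠ r in nhdsWithin (0:ℝ) (Set.Ioi 0), 0 < r :=
        eventually_mem_nhdsWithin.mono (fun r hr => hr)
      filter_upwards [e1, e2, e3] with r h1 h2 h3
      exact ⟨h1, h2, h3⟩
    obtain ⟨r, hrW, hrε, hr0⟩ := hev.exists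
    -- from limsup < c, get eventual window bound
    have hevx : ∀ᶠ x : ℝ in atTop, windowRatio Λ r x < c :=
      eventually_lt_of_limsup_lt hrW (windowRatio_boundedUnder Λ hr0)
    obtain ⟨X₀, hX₀⟩ := (hevx.and (eventually_ge_atTop 1)).exists_forall_of_atTop
    set X₁ : ℕ := max ⌈X₀⌉₊ 1 with hX₁def
    have hX₁1 : 1 ≤ X₁ := le_max_right _ _
    have hX₀X₁ : X₀ ≤ (X₁ : ℝ) := by
      calc X₀ ≤ (⌈X₀⌉₊ : ℝ) := Nat.le_ceil X₀
        _ ≤ (X₁ : ℝ) := by exact_mod_cast le_max_left _ _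
    have H : ∀ x, (X₁:ℝ) ≤ x → (countFn Λ ((1+r)*x) : ℝ) ≤ countFn Λ x + c*r*x := by
      intro x hx
      have hxX₀ : X₀ ≤ x := le_trans hX₀X₁ hx
      obtain ⟨hw, hx1⟩ := hX₀ x hxX₀
      have hx0 : (0:ℝ) < x := by linarith
      unfold windowRatio at hw
      rw [div_lt_iff₀ (by positivity)] at hw
      linarith
    have hupper := gcnt_upper Λ hc0 hr0 X₁ hX₁1 H
    set C₁ : ℝ := (gcnt Λ c X₁ : ℝ) + 1 with hC₁
    have hC₁0 : 0 < C₁ := by positivity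
    filter_upwards [eventually_ge_atTop (max (X₁:ℝ) (C₁/ε))] with x hx
    have hxX₁ : (X₁:ℝ) ≤ x := le_trans (le_max_left _ _) hx
    have hxC : C₁/ε ≤ x := le_trans (le_max_right _ _) hx
    have hx0 : (0:ℝ) < x := lt_of_lt_of_le (by exact_mod_cast hX₁1 : (0:ℝ) < X₁) hxX₁
    rw [div_lt_iff₀ hx0, countFn_gset_real Λ c hx0.le]
    have hflX : X₁ ≤ ⌊x⌋₊ := Nat.le_floor hxX₁
    have hub := hupper ⌊x⌋₊ hflX
    have hfl2 : (⌊x⌋₊ : ℝ) ≤ x := Nat.floor_le hx0.le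
    have h5 : (gcnt Λ c ⌊x⌋₊ : ℝ) ≤ c*(1+r)*x + C₁ := by
      have : c*(1+r)*(⌊x⌋₊:ℝ) ≤ c*(1+r)*x := by
        apply mul_le_mul_of_nonneg_left hfl2 (by positivity)
      linarith
    have h6 : C₁ ≤ ε * x := by
      rw [div_le_iff₀ hε0] at hxC
      linarith
    -- c*(1+r)*x + C₁ ≤ c*x + r*x + ε*x < a*x
    have h7 : c * r ≤ r := by nlinarith
    have h8 : c*(1+r)*x = c*x + (c*r)*x := by ring
    have h9 : (c*r)*x ≤ r*x := mul_le_mul_of_nonneg_right h7 hx0.le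
    have h10 : r*x < ε*x := by
      apply mul_lt_mul_of_pos_right hrε hx0
    have : c*x + ε*x + ε*x = a*x := by
      rw [hε]; ring
    linarith


/-- The maximum density `D̄₂(Λ)` is the infimum of densities of
measurable supersets of `Λ`. -/
theorem maxDensity_eq_inf_superset_densities (Λ : Set ℕ) (L : ℝ)
    (hL : Tendsto (fun r => upperWindow Λ r) (nhdsWithin 0 (Set.Ioi 0)) (nhds L)) :
    IsGLB {d : ℝ | ∃ Λ' : Set ℕ, Λ ⊆ Λ' ∧ HasDensity Λ' d} L := by
  constructor
  · -- L is a lower bound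
    rintro d ⟨Λ', hsub, hd⟩
    refine le_of_tendsto hL ?_
    filter_upwards [eventually_mem_nhdsWithin] with r hr
    exact upperWindow_le_of_superset hsub hr hd
  · -- L is the greatest lower bound
    intro b hb
    have h1S : (1:ℝ) ∈ {d : ℝ | ∃ Λ' : Set ℕ, Λ ⊆ Λ' ∧ HasDensity Λ' d} :=
      ⟨Set.univ, Set.subset_univ Λ, hasDensity_univ⟩
    have hb1 : b ≤ 1 := hb h1S
    have hL0 : 0 ≤ L := by
      refine ge_of_tendsto hL ?_
      filter_upwards [eventually_mem_nhdsWithin] with r hr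
      exact upperWindow_nonneg Λ hr
    by_contra hbL
    push_neg at hbL
    set c : ℝ := (L + min b 1)/2 with hc
    have hLb1 : L < min b 1 := lt_min hbL (lt_of_lt_of_le hbL hb1)
    have hLc : L < c := by rw [hc]; linarith
    have hcb : c < min b 1 := by rw [hc]; linarith
    have hc0 : 0 ≤ c := by rw [hc]; linarith [min_le_left b 1, min_le_right b 1]
    have hc1 : c ≤ 1 := by
      have := min_le_right b 1
      rw [hc]; linarith
    have hcS : c ∈ {d : ℝ | ∃ Λ' : Set ℕ, Λ ⊆ Λ' ∧ HasDensity Λ' d} :=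
      ⟨gset Λ c, subset_gset Λ c, hasDensity_gset Λ hL hLc hc0 hc1⟩
    have : b ≤ c := hb hcS
    have : c < b := lt_of_lt_of_le hcb (min_le_left b 1)
    linarith
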